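/- Let G be a finite simple graph possessing an edge e = {u, v} such that N_G(u) ⊆ N_G[v] or N_G(v) ⊆ N_G[u]. Then v(J(G)) ≤ bight(I(G)) − 1, where bight(I(G)) equals the maximum cardinality of a minimal vertex cover of G. -/

import Mathlib

open MvPolynomial CategoryTheory

noncomputable section

/-- A set of vertices is a vertex cover if it meets every edge. -/
def IsVertexCover {V : Type} (G : SimpleGraph V) (C : Set V) : Prop :=
  ∀ ⦃u v : V⦄, G.Adj u v → u ∈ C ∨ v ∈ C

/-- A vertex cover minimal with respect to inclusion. -/
def IsMinimalVertexCover {V : Type} (G : SimpleGraph V) (C : Set V) : Prop :=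
  IsVertexCover G C ∧ ∀ C' ⊆ C, IsVertexCover G C' → C' = C

/-- `α₀(G)`: the minimum cardinality of a vertex cover of `G`. -/
def coverNumber {V : Type} (G : SimpleGraph V) : ℕ :=
  sInf {k | ∃ C : Set V, IsVertexCover G C ∧ C.ncard = k}

/-- `bight(I(G))`: the maximum cardinality of a minimal vertex cover of `G`. -/
def bigHeight {V : Type} (G : SimpleGraph V) : ℕ :=
  sSup {k | ∃ C : Set V, IsMinimalVertexCover G C ∧ C.ncard = k}

/-- The edge ideal `I(G) ⊆ K[x_v : v ∈ V]`, generated by the monomials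
`x_u * x_v` over the edges `{u,v}` of `G`. -/
def edgeIdeal (K : Type) [Field K] {V : Type} (G : SimpleGraph V) :
    Ideal (MvPolynomial V K) :=
  Ideal.span {m | ∃ u v : V, G.Adj u v ∧ m = X u * X v}

/-- The cover ideal `J(G) = ⋂_{{u,v} ∈ E(G)} ⟨x_u, x_v⟩`. -/
def coverIdeal (K : Type) [Field K] {V : Type} (G : SimpleGraph V) :
    Ideal (MvPolynomial V K) :=
  ⨅ (u : V) (v : V) (_ : G.Adj u v), Ideal.span {X u, X v}

/-- The v-number of a graded ideal `I`: the least `d ≥ 0` such that there is a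
homogeneous polynomial `f` of degree `d` with `I : f` a prime ideal. -/
def vNumber {K : Type} [Field K] {V : Type} (I : Ideal (MvPolynomial V K)) : ℕ :=
  sInf {d | ∃ f : MvPolynomial V K, f.IsHomogeneous d ∧
    (I.colon (Ideal.span {f})).IsPrime}

/-- The homogeneous maximal ideal `⟨x_1, …, x_n⟩` of the polynomial ring. -/
def maxIdeal (K : Type) [Field K] (V : Type) : Ideal (MvPolynomial V K) :=
  Ideal.span (Set.range (X : V → MvPolynomial V K))

/-- The depth of the module `M` with respect to the ideal `J`: the supremum of
the lengths of regular sequences on `M` consisting of elements of `J`. -/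
def mdepth {R : Type} [CommRing R] (J : Ideal R) (M : Type) [AddCommGroup M]
    [Module R M] : ℕ :=
  sSup {k | ∃ rs : List R, rs.length = k ∧ (∀ r ∈ rs, r ∈ J) ∧
    RingTheory.Sequence.IsRegular M rs}

/-- The projective dimension of an `R`-module `M`, characterized by the
vanishing of `Ext^i(M, N)` for all `i > d` and all modules `N`. -/
def projDim (R : Type) [CommRing R] (M : ModuleCat.{0} R) : ℕ :=
  sInf {d : ℕ | ∀ (N : ModuleCat.{0} R) (i : ℕ), d < i →
    Subsingleton (((Ext R (ModuleCat.{0} R) i).obj (Opposite.op M)).obj N)}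

section Aux
variable {K : Type} [Field K] {n : ℕ}


def substUV (u v : Fin n) : Fin n → MvPolynomial (Fin n) K :=
  fun w => if w = u then 0 else if w = v then 0 else X w

lemma substUV_u (u v : Fin n) : (substUV u v u : MvPolynomial (Fin n) K) = 0 := if_pos rfl

lemma substUV_v (u v : Fin n) : (substUV u v v : MvPolynomial (Fin n) K) = 0 := by
  unfold substUV
  by_cases h : v = u <;> simp [h]

lemma substUV_other {u v w : Fin n} (h1 : w ≠ u) (h2 : w ≠ v) :
    (substUV u v w : MvPolynomial (Fin n) K) = X w := by
  unfold substUV; rw [if_neg h1, if_neg h2]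

lemma Xu_mem (u v : Fin n) : (X u : MvPolynomial (Fin n) K) ∈ Ideal.span {X u, X v} :=
  Ideal.subset_span (Set.mem_insert _ _)

lemma Xv_mem (u v : Fin n) : (X v : MvPolynomial (Fin n) K) ∈ Ideal.span {X u, X v} :=
  Ideal.subset_span (Set.mem_insert_of_mem _ rfl)

lemma sub_aeval_mem (u v : Fin n) (p : MvPolynomial (Fin n) K) :
    p - aeval (substUV u v) p ∈ Ideal.span {X u, X v} := by
  induction p using MvPolynomial.induction_on with
  | C a => simp
  | add p q hp hq =>
      simpa [map_add, add_sub_add_comm] using Ideal.add_mem _ hp hq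
  | mul_X p w hp =>
      rw [map_mul, aeval_X]
      by_cases hwu : w = u
      · subst hwu
        rw [substUV_u, mul_zero, sub_zero]
        exact Ideal.mul_mem_left _ p (Xu_mem w v)
      · by_cases hwv : w = v
        · subst hwv
          rw [substUV_v, mul_zero, sub_zero]
          exact Ideal.mul_mem_left _ p (Xv_mem u w)
        · rw [substUV_other hwu hwv]
          have h : p * X w - aeval (substUV u v : Fin n → MvPolynomial (Fin n) K) p * X w
              = (p - aeval (substUV u v : Fin n → MvPolynomial (Fin n) K) p) * X w := by ring
          rw [h]
          exact Ideal.mul_mem_right _ _ hp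

lemma span_XX_eq_ker (u v : Fin n) :
    (Ideal.span {X u, X v} : Ideal (MvPolynomial (Fin n) K)) =
      RingHom.ker (aeval (substUV u v) : MvPolynomial (Fin n) K →ₐ[K] MvPolynomial (Fin n) K) := by
  apply le_antisymm
  · rw [Ideal.span_le]
    rintro m hm
    rcases hm with rfl | rfl
    · simp [RingHom.mem_ker, substUV_u]
    · simp [RingHom.mem_ker, substUV_v]
  · intro p hp
    have h0 : aeval (substUV u v : Fin n → MvPolynomial (Fin n) K) p = 0 := hp
    have := sub_aeval_mem u v p
    rwa [h0, sub_zero] at this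

lemma span_XX_isPrime (u v : Fin n) :
    (Ideal.span {X u, X v} : Ideal (MvPolynomial (Fin n) K)).IsPrime := by
  rw [span_XX_eq_ker]
  exact RingHom.ker_isPrime _



lemma exists_maximal_indep (G : SimpleGraph (Fin n)) (v : Fin n) :
    ∃ M : Set (Fin n), v ∈ M ∧ (∀ a ∈ M, ∀ b ∈ M, ¬ G.Adj a b) ∧
      ∀ M', v ∈ M' → (∀ a ∈ M', ∀ b ∈ M', ¬ G.Adj a b) → M ⊆ M' → M' = M := by
  obtain ⟨M, hM, hmax⟩ := Set.Finite.exists_maximalFor id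
    {M : Set (Fin n) | v ∈ M ∧ ∀ a ∈ M, ∀ b ∈ M, ¬ G.Adj a b}
    (Set.toFinite _)
    ⟨{v}, Set.mem_singleton _, by
      intro a ha b hb
      rw [Set.mem_singleton_iff] at ha hb
      subst ha; subst hb; exact G.irrefl⟩
  exact ⟨M, hM.1, hM.2, fun M' h1 h2 hsub => Set.Subset.antisymm (hmax ⟨h1, h2⟩ hsub) hsub⟩


lemma mem_coverIdeal {G : SimpleGraph (Fin n)} {p : MvPolynomial (Fin n) K} :
    p ∈ coverIdeal K G ↔ ∀ a b : Fin n, G.Adj a b → p ∈ Ideal.span {X a, X b} := by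
  simp [coverIdeal, Ideal.mem_iInf]

lemma main_lemma (G : SimpleGraph (Fin n)) (u v : Fin n) (huv : G.Adj u v)
    (hN : G.neighborSet u ⊆ insert v (G.neighborSet v)) :
    vNumber (coverIdeal K G) ≤ bigHeight G - 1 := by
  classical
  obtain ⟨M, hvM, hind, hmax⟩ := exists_maximal_indep G v
  set C : Set (Fin n) := Mᶜ with hCdef
  have huC : u ∈ C := fun hu => hind u hu v hvM huv
  have hvC : v ∉ C := fun hv => hv hvM
  have hcov : IsVertexCover G C := by
    intro a b hab
    by_contra h
    push_neg at h
    exact hind a (Set.not_notMem.1 h.1) b (Set.not_notMem.1 h.2) hab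
  have hmin : IsMinimalVertexCover G C := by
    refine ⟨hcov, fun C' hsub hcov' => ?_⟩
    by_contra hne
    obtain ⟨w, hwC, hwC'⟩ : ∃ w, w ∈ C ∧ w ∉ C' := by
      by_contra h
      push_neg at h
      exact hne (hsub.antisymm h)
    have hwM : w ∉ M := hwC
    have hins : insert w M ≠ M := fun h => hwM (h ▸ Set.mem_insert w M)
    have hni : ¬ (∀ a ∈ insert w M, ∀ b ∈ insert w M, ¬ G.Adj a b) := fun hi =>
      hins (hmax _ (Set.mem_insert_iff.2 (Or.inr hvM)) hi (Set.subset_insert _ _))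
    push_neg at hni
    obtain ⟨a, ha, b, hb, hab⟩ := hni
    have key : ∀ a b : Fin n, G.Adj a b → a = w → b ∈ M → False := by
      intro a b hab haw hbM
      subst haw
      rcases hcov' hab with h | h
      · exact hwC' h
      · exact (hsub h) hbM
    rcases Set.mem_insert_iff.1 ha with rfl | haM
    · rcases Set.mem_insert_iff.1 hb with rfl | hbM
      · exact G.irrefl hab
      · exact key _ _ hab rfl hbM
    · rcases Set.mem_insert_iff.1 hb with rfl | hbM
      · exact key _ _ hab.symm rfl haM
      · exact hind a haM b hbM hab
  have hNC : ∀ w : Fin n, G.Adj u w → w ≠ v → w ∈ C := by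
    intro w hw hwv
    have h1 : w ∈ insert v (G.neighborSet v) := hN hw
    have h2 : G.Adj v w := by
      rcases Set.mem_insert_iff.1 h1 with h | h
      · exact absurd h hwv
      · exact h
    rcases hcov h2 with h | h
    · exact absurd h hvC
    · exact h
  set S : Set (Fin n) := C \ {u} with hSdef
  have hSuv : ∀ w ∈ S, w ≠ u ∧ w ≠ v := by
    intro w hw
    refine ⟨hw.2, fun h => hvC (h ▸ hw.1)⟩
  have hScov : ∀ a b : Fin n, G.Adj a b → ¬(a = u ∧ b = v) → ¬(a = v ∧ b = u) →
      ∃ w ∈ S, w = a ∨ w = b := by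
    intro a b hab h1 h2
    by_cases hau : a = u
    · subst hau
      have hbv : b ≠ v := fun h => h1 ⟨rfl, h⟩
      exact ⟨b, ⟨hNC b hab hbv, hab.ne'⟩, Or.inr rfl⟩
    · by_cases hbu : b = u
      · subst hbu
        have hav : a ≠ v := fun h => h2 ⟨h, rfl⟩
        exact ⟨a, ⟨hNC a hab.symm hav, hab.ne⟩, Or.inl rfl⟩
      · rcases hcov hab with h | h
        · exact ⟨a, ⟨h, hau⟩, Or.inl rfl⟩
        · exact ⟨b, ⟨h, hbu⟩, Or.inr rfl⟩
  have hSfin : S.Finite := Set.toFinite S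
  set s : Finset (Fin n) := hSfin.toFinset with hsdef
  have hmem_s : ∀ w : Fin n, w ∈ s ↔ w ∈ S := fun w => hSfin.mem_toFinset
  set f : MvPolynomial (Fin n) K := ∏ w ∈ s, X w with hfdef
  have hfhom : f.IsHomogeneous s.card := by
    have := MvPolynomial.IsHomogeneous.prod s (fun w => (X w : MvPolynomial (Fin n) K))
      (fun _ => 1) (fun i _ => isHomogeneous_X K i)
    simpa using this
  have hprime : (Ideal.span {X u, X v} : Ideal (MvPolynomial (Fin n) K)).IsPrime :=
    span_XX_isPrime u v
  have hfdvd : ∀ (a b w : Fin n), w ∈ s → (w = a ∨ w = b) →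
      f ∈ Ideal.span {X a, X b} := by
    intro a b w hw hwab
    rw [hfdef, ← Finset.mul_prod_erase s _ hw]
    refine Ideal.mul_mem_right _ _ ?_
    rcases hwab with rfl | rfl
    · exact Xu_mem _ _
    · exact Xv_mem _ _
  have hfnotin : f ∉ Ideal.span {X u, X v} := by
    intro hmem
    rw [span_XX_eq_ker] at hmem
    have h0 : aeval (substUV u v : Fin n → MvPolynomial (Fin n) K) f = 0 := hmem
    have heq : aeval (substUV u v : Fin n → MvPolynomial (Fin n) K) f = f := by
      rw [hfdef, map_prod]
      refine Finset.prod_congr rfl fun w hw => ?_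
      obtain ⟨h1, h2⟩ := hSuv w ((hmem_s w).1 hw)
      rw [aeval_X, substUV_other h1 h2]
    rw [heq] at h0
    have : f ≠ 0 := by
      rw [hfdef]
      exact Finset.prod_ne_zero_iff.2 fun w _ => X_ne_zero w
    exact this h0
  have hcolon : (coverIdeal K G).colon (Ideal.span {f}) = Ideal.span {X u, X v} := by
    apply le_antisymm
    · intro r hr
      rw [Ideal.mem_colon_span_singleton] at hr
      have huvmem : r * f ∈ Ideal.span {X u, X v} := mem_coverIdeal.1 hr u v huv
      rcases hprime.mem_or_mem huvmem with h | h
      · exact h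
      · exact absurd h hfnotin
    · rw [Ideal.span_le]
      rintro m hm
      rw [SetLike.mem_coe, Ideal.mem_colon_span_singleton, mem_coverIdeal]
      intro a b hab
      by_cases h1 : a = u ∧ b = v
      · obtain ⟨rfl, rfl⟩ := h1
        exact Ideal.mul_mem_right _ _ (Ideal.subset_span hm)
      · by_cases h2 : a = v ∧ b = u
        · obtain ⟨rfl, rfl⟩ := h2
          refine Ideal.mul_mem_right _ _ ?_
          rcases hm with rfl | rfl
          · exact Xv_mem _ _
          · exact Xu_mem _ _
        · obtain ⟨w, hwS, hw⟩ := hScov a b hab h1 h2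
          exact Ideal.mul_mem_left _ _ (hfdvd a b w ((hmem_s w).2 hwS) hw)
  have hvle : vNumber (coverIdeal K G) ≤ s.card :=
    Nat.sInf_le ⟨f, hfhom, by rw [hcolon]; exact hprime⟩
  have hscard : s.card = C.ncard - 1 := by
    have h1 : S.ncard = s.card := Set.ncard_eq_toFinset_card S hSfin
    rw [← h1, hSdef]
    exact Set.ncard_diff_singleton_of_mem huC
  have hCle : C.ncard ≤ bigHeight G := by
    apply le_csSup
    · refine ⟨n, ?_⟩
      rintro k ⟨D, _, rfl⟩
      calc D.ncard ≤ (Set.univ : Set (Fin n)).ncard :=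
            Set.ncard_le_ncard (Set.subset_univ D) (Set.toFinite _)
        _ = n := by simp [Set.ncard_univ]
    · exact ⟨C, hmin, rfl⟩
  calc vNumber (coverIdeal K G) ≤ s.card := hvle
    _ = C.ncard - 1 := hscard
    _ ≤ bigHeight G - 1 := Nat.sub_le_sub_right hCle 1

end Aux

/-- If `G` has an edge `{u,v}` with `N_G(u) ⊆ N_G[v]` or `N_G(v) ⊆ N_G[u]`,
then `v(J(G)) ≤ bight(I(G)) - 1`. -/
theorem vNumber_coverIdeal_le_bigHeight_sub_one
    {K : Type} [Field K] {n : ℕ} (hn : 1 ≤ n) (G : SimpleGraph (Fin n))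
    (u v : Fin n) (huv : G.Adj u v)
    (hN : G.neighborSet u ⊆ insert v (G.neighborSet v) ∨
      G.neighborSet v ⊆ insert u (G.neighborSet u)) :
    vNumber (coverIdeal K G) ≤ bigHeight G - 1 := by
  rcases hN with h | h
  · exact main_lemma G u v huv h
  · exact main_lemma G v u huv.symm h

end
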